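/- Let m_X, m_Y, Ω_X, Ω_Y, α, γ̄, C > 0 be real numbers, let f be the α-Beaulieu-Xie shadowed SNR probability density with normalizing constant C, and let γ_th > 0. Then the outage probability P_out(γ_th) = ∫₀^{γ_th} f(γ) dγ is bounded below by the bound P_out^{LB} = (θ^{m_Y}/(C^{m_X} Γ(m_X + 1))) · (γ_th/γ̄)^{α m_X/2} · exp(−(1/C)(γ_th/γ̄)^{α/2}); that is, P_out^{LB} ≤ P_out(γ_th). -/

import Mathlib

open Real MeasureTheory Set

/-- Pochhammer symbol `(q)_n = q (q+1) ⋯ (q+n-1)`, with `(q)_0 = 1`. -/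
noncomputable def poch (q : ℝ) (n : ℕ) : ℝ := ∏ i ∈ Finset.range n, (q + i)

/-- Confluent (Kummer) hypergeometric function `₁F₁(a; b; z)`. -/
noncomputable def oneF1 (a b z : ℝ) : ℝ :=
  ∑' n : ℕ, (poch a n / poch b n) * z ^ n / (n.factorial : ℝ)

/-- Gauss hypergeometric function `₂F₁(a, b; c; z)`. -/
noncomputable def twoF1 (a b c z : ℝ) : ℝ :=
  ∑' n : ℕ, (poch a n * poch b n / poch c n) * z ^ n / (n.factorial : ℝ)

/-- Confluent Appell (Humbert) function `Φ₂(b₁, b₂; c; x, y)`. -/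
noncomputable def Phi2 (b₁ b₂ c x y : ℝ) : ℝ :=
  ∑' p : ℕ × ℕ, (poch b₁ p.1 * poch b₂ p.2 / poch c (p.1 + p.2)) *
    x ^ p.1 * y ^ p.2 / ((p.1.factorial : ℝ) * (p.2.factorial : ℝ))

lemma poch_pos {q : ℝ} (hq : 0 < q) (n : ℕ) : 0 < poch q n :=
  Finset.prod_pos fun i _ => by positivity

lemma poch_le {a b : ℝ} (ha : 0 < a) (hb : 0 < b) (n : ℕ) :
    poch a n ≤ (max 1 (a / b)) ^ n * poch b n := by
  have hR1 : (1:ℝ) ≤ max 1 (a / b) := le_max_left _ _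
  have hR2 : a / b ≤ max 1 (a / b) := le_max_right _ _
  have h1 : a ≤ max 1 (a / b) * b := by
    rw [← div_le_iff₀ hb]; exact hR2
  calc poch a n ≤ ∏ i ∈ Finset.range n, (max 1 (a / b) * (b + i)) := by
        refine Finset.prod_le_prod (fun i _ => by positivity) (fun i _ => ?_)
        nlinarith [Nat.cast_nonneg (α := ℝ) i]
  _ = (max 1 (a / b)) ^ n * poch b n := by
        rw [Finset.prod_mul_distrib, Finset.prod_const, Finset.card_range, poch]

lemma abs_term_le {a b : ℝ} (ha : 0 < a) (hb : 0 < b) (z : ℝ) (n : ℕ) :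
    |poch a n / poch b n * z ^ n / (n.factorial : ℝ)| ≤
      (max 1 (a / b) * |z|) ^ n / (n.factorial : ℝ) := by
  have h1 := poch_pos ha n
  have h2 := poch_pos hb n
  have h3 : (0:ℝ) < n.factorial := by positivity
  rw [abs_div, abs_mul, abs_div, abs_of_pos h1, abs_of_pos h2, abs_of_pos h3, abs_pow, mul_pow]
  rw [div_mul_eq_mul_div, div_div, div_le_div_iff₀ (by positivity) h3]
  have key := mul_le_mul_of_nonneg_right (poch_le ha hb n)
    (show (0:ℝ) ≤ |z| ^ n * (n.factorial : ℝ) by positivity)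
  nlinarith [key]

lemma summable_term {a b : ℝ} (ha : 0 < a) (hb : 0 < b) (z : ℝ) :
    Summable (fun n => poch a n / poch b n * z ^ n / (n.factorial : ℝ)) := by
  refine Summable.of_abs (Summable.of_nonneg_of_le (fun n => abs_nonneg _)
    (abs_term_le ha hb z) ?_)
  exact Real.summable_pow_div_factorial _

lemma term_nonneg {a b : ℝ} (ha : 0 < a) (hb : 0 < b) {z : ℝ} (hz : 0 ≤ z) (n : ℕ) :
    0 ≤ poch a n / poch b n * z ^ n / (n.factorial : ℝ) := by
  have := poch_pos ha n; have := poch_pos hb n; positivity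

lemma one_le_oneF1 {a b : ℝ} (ha : 0 < a) (hb : 0 < b) {z : ℝ} (hz : 0 ≤ z) :
    1 ≤ oneF1 a b z := by
  have h := Summable.le_tsum (summable_term ha hb z) 0 (fun n _ => term_nonneg ha hb hz n)
  simpa [poch, oneF1] using h

lemma oneF1_mono {a b : ℝ} (ha : 0 < a) (hb : 0 < b) {z Z : ℝ} (hz : 0 ≤ z) (hzZ : z ≤ Z) :
    oneF1 a b z ≤ oneF1 a b Z := by
  refine Summable.tsum_le_tsum (fun n => ?_) (summable_term ha hb z) (summable_term ha hb Z)
  have h1 := poch_pos ha n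
  have h2 := poch_pos hb n
  have h3 : (0:ℝ) < n.factorial := by positivity
  have hzn : z ^ n ≤ Z ^ n := pow_le_pow_left₀ hz hzZ n
  gcongr

lemma measurable_oneF1 (a b : ℝ) (ha : 0 < a) (hb : 0 < b) : Measurable (oneF1 a b) := by
  apply measurable_of_tendsto_metrizable
    (f := fun N z => ∑ n ∈ Finset.range N, poch a n / poch b n * z ^ n / (n.factorial : ℝ))
  · intro N
    exact Finset.measurable_sum _ (fun n _ => by
      exact ((measurable_id.pow_const n).const_mul _).div_const _)
  · rw [tendsto_pi_nhds]
    intro z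
    exact (summable_term ha hb z).hasSum.tendsto_sum_nat

/-- The α-Beaulieu-Xie shadowed SNR probability density with parameters
`mX, mY, ΩX, ΩY, α`, average SNR `γbar` and normalizing constant `C`, where
`θ = mY ΩX / (mY ΩX + mX ΩY)` and `δ = mX ΩY / (mY ΩX + mX ΩY)`. -/
noncomputable def aBXpdf (mX mY ΩX ΩY α γbar C γ : ℝ) : ℝ :=
  (α * (mY * ΩX / (mY * ΩX + mX * ΩY)) ^ mY / (2 * C ^ mX * Real.Gamma mX * γbar)) *
    (γ / γbar) ^ (α * mX / 2 - 1) * Real.exp (-(1 / C) * (γ / γbar) ^ (α / 2)) *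
    oneF1 mY mX ((mX * ΩY / (mY * ΩX + mX * ΩY)) / C * (γ / γbar) ^ (α / 2))

/-- The lower bound `P_out^{LB}` on the outage probability of the
α-Beaulieu-Xie shadowed channel. -/
theorem statement_9 (mX mY ΩX ΩY α γbar C : ℝ) (hmX : 0 < mX) (hmY : 0 < mY)
    (hΩX : 0 < ΩX) (hΩY : 0 < ΩY) (hα : 0 < α) (hγbar : 0 < γbar) (hC : 0 < C)
    (γth : ℝ) (hγth : 0 < γth) :
    (mY * ΩX / (mY * ΩX + mX * ΩY)) ^ mY / (C ^ mX * Real.Gamma (mX + 1)) *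
        (γth / γbar) ^ (α * mX / 2) * Real.exp (-(1 / C) * (γth / γbar) ^ (α / 2))
      ≤ ∫ γ in Set.Ioc (0 : ℝ) γth, aBXpdf mX mY ΩX ΩY α γbar C γ := by
  have hs : 0 < mY * ΩX + mX * ΩY := by positivity
  set θ : ℝ := mY * ΩX / (mY * ΩX + mX * ΩY) with hθdef
  set δ : ℝ := mX * ΩY / (mY * ΩX + mX * ΩY) with hδdef
  have hθ : 0 < θ := by positivity
  have hδ : 0 < δ := by positivity
  have hΓ : 0 < Real.Gamma mX := Real.Gamma_pos_of_pos hmX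
  set p : ℝ := α * mX / 2 with hpdef
  have hp : 0 < p := by positivity
  set K : ℝ := α * θ ^ mY / (2 * C ^ mX * Real.Gamma mX * γbar) with hKdef
  have hCm : (0:ℝ) < C ^ mX := Real.rpow_pos_of_pos hC mX
  have hK : 0 < K := by positivity
  set E : ℝ := Real.exp (-(1 / C) * (γth / γbar) ^ (α / 2)) with hEdef
  have hE : 0 < E := Real.exp_pos _
  set Z : ℝ := δ / C * (γth / γbar) ^ (α / 2) with hZdef
  have hZ : 0 ≤ Z := by positivity
  set M : ℝ := oneF1 mY mX Z with hMdef
  have hM : 1 ≤ M := one_le_oneF1 hmY hmX hZ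
  -- pointwise facts on Ioc
  have key : ∀ γ ∈ Set.Ioc (0:ℝ) γth,
      K * E / γbar ^ (p - 1) * γ ^ (p - 1) ≤ aBXpdf mX mY ΩX ΩY α γbar C γ ∧
      aBXpdf mX mY ΩX ΩY α γbar C γ ≤ K * M / γbar ^ (p - 1) * γ ^ (p - 1) := by
    intro γ hγ
    obtain ⟨hγ0, hγth'⟩ := hγ
    have hu : 0 < γ / γbar := by positivity
    have hupow : (γ / γbar) ^ (p - 1) = γ ^ (p - 1) / γbar ^ (p - 1) :=
      Real.div_rpow hγ0.le hγbar.le _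
    have hule : (γ / γbar) ^ (α / 2) ≤ (γth / γbar) ^ (α / 2) :=
      Real.rpow_le_rpow hu.le (by gcongr) (by positivity)
    have hzle : δ / C * (γ / γbar) ^ (α / 2) ≤ Z := by
      rw [hZdef]; gcongr
    have hz0 : 0 ≤ δ / C * (γ / γbar) ^ (α / 2) := by positivity
    have hone1 : 1 ≤ oneF1 mY mX (δ / C * (γ / γbar) ^ (α / 2)) :=
      one_le_oneF1 hmY hmX hz0
    have honeM : oneF1 mY mX (δ / C * (γ / γbar) ^ (α / 2)) ≤ M :=
      oneF1_mono hmY hmX hz0 hzle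
    have hexpE : E ≤ Real.exp (-(1 / C) * (γ / γbar) ^ (α / 2)) := by
      apply Real.exp_le_exp.2
      have h1C : (0:ℝ) ≤ 1 / C := by positivity
      nlinarith
    have hexp1 : Real.exp (-(1 / C) * (γ / γbar) ^ (α / 2)) ≤ 1 := by
      have h0 : (0:ℝ) ≤ 1 / C * (γ / γbar) ^ (α / 2) := by positivity
      have := Real.exp_le_exp.2 (show -(1 / C) * (γ / γbar) ^ (α / 2) ≤ 0 by linarith)
      simpa using this
    have hexp0 : 0 < Real.exp (-(1 / C) * (γ / γbar) ^ (α / 2)) := Real.exp_pos _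
    have hup : 0 < (γ / γbar) ^ (p - 1) := Real.rpow_pos_of_pos hu _
    have hpdf : aBXpdf mX mY ΩX ΩY α γbar C γ =
        K * (γ / γbar) ^ (p - 1) * Real.exp (-(1 / C) * (γ / γbar) ^ (α / 2)) *
          oneF1 mY mX (δ / C * (γ / γbar) ^ (α / 2)) := by
      rw [aBXpdf, hKdef, hpdef, hθdef, hδdef]
    constructor
    · rw [hpdf]
      have h1 : K * E / γbar ^ (p - 1) * γ ^ (p - 1) = K * (γ / γbar) ^ (p - 1) * E * 1 := by
        rw [hupow]; ring
      rw [h1]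
      have hKu : 0 ≤ K * (γ / γbar) ^ (p - 1) := by positivity
      apply mul_le_mul (mul_le_mul_of_nonneg_left hexpE hKu) hone1 one_pos.le
      positivity
    · rw [hpdf]
      have h1 : K * M / γbar ^ (p - 1) * γ ^ (p - 1) = K * (γ / γbar) ^ (p - 1) * 1 * M := by
        rw [hupow]; ring
      rw [h1]
      have hKu : 0 ≤ K * (γ / γbar) ^ (p - 1) := by positivity
      apply mul_le_mul (mul_le_mul_of_nonneg_left hexp1 hKu) honeM ?_ (by positivity)
      exact le_trans (by positivity) hone1
  -- integrability of the upper-bound function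
  have hgbp : (0:ℝ) < γbar ^ (p - 1) := Real.rpow_pos_of_pos hγbar _
  have hintB : ∀ c : ℝ, IntegrableOn (fun γ : ℝ => c * γ ^ (p - 1)) (Set.Ioc 0 γth) := by
    intro c
    have := (intervalIntegral.intervalIntegrable_rpow' (a := 0) (b := γth) (r := p - 1) (by linarith)).const_mul c
    rwa [intervalIntegrable_iff_integrableOn_Ioc_of_le hγth.le] at this
  -- measurability of the pdf
  have hcont : ∀ c : ℝ, ContinuousOn (fun γ : ℝ => (γ / γbar) ^ c) (Set.Ioc (0:ℝ) γth) := by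
    intro c
    refine ContinuousOn.rpow_const ((continuous_id.div_const γbar).continuousOn) ?_
    intro x hx
    exact Or.inl (ne_of_gt (div_pos hx.1 hγbar))
  have hmeas : AEStronglyMeasurable (fun γ => aBXpdf mX mY ΩX ΩY α γbar C γ)
      (volume.restrict (Set.Ioc (0:ℝ) γth)) := by
    unfold aBXpdf
    have contA : ContinuousOn (fun γ : ℝ =>
        α * (mY * ΩX / (mY * ΩX + mX * ΩY)) ^ mY / (2 * C ^ mX * Real.Gamma mX * γbar) *
          (γ / γbar) ^ (α * mX / 2 - 1) *
          Real.exp (-(1 / C) * (γ / γbar) ^ (α / 2))) (Set.Ioc (0:ℝ) γth) := by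
      refine ContinuousOn.mul (continuousOn_const.mul (hcont _)) ?_
      exact Real.continuous_exp.comp_continuousOn ((hcont (α / 2)).const_smul (-(1/C)))
    have h2 : AEStronglyMeasurable
        (fun γ : ℝ => oneF1 mY mX (mX * ΩY / (mY * ΩX + mX * ΩY) / C * (γ / γbar) ^ (α / 2)))
        (volume.restrict (Set.Ioc (0:ℝ) γth)) := by
      have hAE : AEMeasurable
          (fun γ : ℝ => mX * ΩY / (mY * ΩX + mX * ΩY) / C * (γ / γbar) ^ (α / 2))
          (volume.restrict (Set.Ioc (0:ℝ) γth)) :=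
        (((hcont (α / 2)).aemeasurable measurableSet_Ioc).const_mul _)
      exact ((measurable_oneF1 mY mX hmY hmX).comp_aemeasurable hAE).aestronglyMeasurable
    exact (contA.aestronglyMeasurable measurableSet_Ioc).mul h2
  -- integrability of the pdf
  have hintf : IntegrableOn (fun γ => aBXpdf mX mY ΩX ΩY α γbar C γ) (Set.Ioc (0:ℝ) γth) := by
    apply (hintB (K * M / γbar ^ (p - 1))).mono' hmeas
    rw [ae_restrict_iff' measurableSet_Ioc]
    filter_upwards with γ hγ
    obtain ⟨hlo, hhi⟩ := key γ hγ
    rw [Real.norm_eq_abs, abs_of_nonneg]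
    · exact hhi
    · refine le_trans ?_ hlo
      obtain ⟨hγ0, _⟩ := hγ
      positivity
  -- comparison
  have hcomp : ∫ γ in Set.Ioc (0:ℝ) γth, K * E / γbar ^ (p - 1) * γ ^ (p - 1)
      ≤ ∫ γ in Set.Ioc (0:ℝ) γth, aBXpdf mX mY ΩX ΩY α γbar C γ :=
    setIntegral_mono_on (hintB _) hintf measurableSet_Ioc (fun γ hγ => (key γ hγ).1)
  refine le_trans (le_of_eq ?_) hcomp
  -- compute the integral of the lower bound
  have hint : ∫ γ in Set.Ioc (0:ℝ) γth, K * E / γbar ^ (p - 1) * γ ^ (p - 1)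
      = K * E / γbar ^ (p - 1) * (γth ^ p / p) := by
    rw [← intervalIntegral.integral_of_le hγth.le, intervalIntegral.integral_const_mul,
      integral_rpow (Or.inl (by linarith)), Real.zero_rpow (by linarith), sub_add_cancel]
    norm_num
  rw [hint]
  have hΓ1 : Real.Gamma (mX + 1) = mX * Real.Gamma mX := Real.Gamma_add_one hmX.ne'
  have hdivth : (γth / γbar) ^ p = γth ^ p / γbar ^ p := Real.div_rpow hγth.le hγbar.le _
  have hgb : γbar ^ p = γbar * γbar ^ (p - 1) := by
    rw [show p = 1 + (p - 1) by ring, Real.rpow_add hγbar, Real.rpow_one]; ring_nf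
  rw [hΓ1, hdivth, hKdef, hpdef] at *
  field_simp
  rw [show (mX * α - 2) / 2 = α * mX / 2 - 1 by ring, show mX * α / 2 = α * mX / 2 by ring]
  linarith [hgb]
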